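/- Let q, d ≥ 3 be integers, β > 0 real, x ∈ (1/q, 1) satisfy x = (1+(e^β-1)x)^(d-1) / ((1+(e^β-1)x)^(d-1) + (q-1)·(1+(e^β-1)·(1-x)/(q-1))^(d-1)), and set t = (1+(e^β-1)x)/(1+(e^β-1)·(1-x)/(q-1)), r = (e^β-1)·x/(1+(e^β-1)·x). Then y = (1-x)/((q-1)·x) satisfies y = (1 - r + r·y)^(d-1). -/
import Mathlib


/-- The value y = (1-x)/((q-1)x) is a fixed point of y = (1-r+ry)^(d-1) where
r is the effective percolation parameter of the dominant colour class. -/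
theorem extinction_prob_formula (q d : ℕ) (hq : 3 ≤ q) (hd : 3 ≤ d)
    (β x : ℝ) (hβ : 0 < β) (hx : x ∈ Set.Ioo (1/(q:ℝ)) 1)
    (hfix : x = (1+(Real.exp β-1)*x)^(d-1) /
      ((1+(Real.exp β-1)*x)^(d-1)
        + ((q:ℝ)-1)*(1+(Real.exp β-1)*(1-x)/((q:ℝ)-1))^(d-1)))
    (t r : ℝ)
    (ht : t = (1+(Real.exp β-1)*x)/(1+(Real.exp β-1)*(1-x)/((q:ℝ)-1)))
    (hr : r = (Real.exp β-1)*x/(1+(Real.exp β-1)*x)) :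
    (1-x)/(((q:ℝ)-1)*x) = (1 - r + r*((1-x)/(((q:ℝ)-1)*x)))^(d-1) := by
  obtain ⟨hx1, hx2⟩ := hx
  have hq' : (3:ℝ) ≤ (q:ℝ) := by exact_mod_cast hq
  have hq1 : (0:ℝ) < (q:ℝ) - 1 := by linarith
  have hqpos : (0:ℝ) < (q:ℝ) := by linarith
  have hxpos : 0 < x := lt_trans (by positivity) hx1
  have hE : 0 < Real.exp β - 1 := by
    have := Real.add_one_le_exp β
    linarith
  set E := Real.exp β - 1 with hEdef
  have hA : 0 < 1 + E * x := by positivity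
  have hB : 0 < 1 + E * (1 - x) / ((q:ℝ) - 1) := by
    have h1x : 0 < 1 - x := by linarith
    positivity
  set A := 1 + E * x with hAdef
  set B := 1 + E * (1 - x) / ((q:ℝ) - 1) with hBdef
  have hApow : 0 < A ^ (d - 1) := pow_pos hA _
  have hBpow : 0 < B ^ (d - 1) := pow_pos hB _
  -- from the fixed point equation: (1-x) * A^(d-1) = (q-1) * x * B^(d-1)
  have hkey : (1 - x) * A ^ (d - 1) = ((q:ℝ) - 1) * x * B ^ (d - 1) := by
    have hden : A ^ (d - 1) + ((q:ℝ) - 1) * B ^ (d - 1) ≠ 0 := by positivity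
    have := hfix
    field_simp at this
    nlinarith [this]
  -- 1 - r + r * y = B / A
  have hstep : 1 - r + r * ((1 - x) / (((q:ℝ) - 1) * x)) = B / A := by
    rw [hr]
    rw [hAdef, hBdef]
    field_simp
    ring
  rw [hstep, div_pow]
  rw [div_eq_div_iff (by positivity) (ne_of_gt hApow)]
  nlinarith [hkey]
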